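/- The flip graph on acyclic orientations of a finite graph G (two acyclic orientations being adjacent if they differ in the orientation of exactly one edge) is connected. -/

import Mathlib

/-- An acyclic orientation of `G`, given by a choice, for each edge, of the endpoint
toward which the edge is directed, such that the resulting digraph has no directed
cycle. -/
def IsAcyclicO {V : Type*} (G : SimpleGraph V) (o : G.edgeSet → V) : Prop :=
  (∀ e : G.edgeSet, o e ∈ (e : Sym2 V)) ∧
    ∀ v : V, ¬ Relation.TransGen
      (fun a b => ∃ e : G.edgeSet, (e : Sym2 V) = s(a, b) ∧ o e = b) v v

namespace FlipAux

open Relation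

variable {V : Type*} [Fintype V] {G : SimpleGraph V}

/-- The step relation of an orientation. -/
def step (o : G.edgeSet → V) (a b : V) : Prop :=
  ∃ e : G.edgeSet, (e : Sym2 V) = s(a, b) ∧ o e = b

lemma acyclic_iff {o : G.edgeSet → V} (ho : IsAcyclicO G o) (v : V) :
    ¬ Relation.TransGen (step o) v v := ho.2 v

lemma step_ne {o : G.edgeSet → V} {a b : V} (h : step o a b) : a ≠ b := by
  obtain ⟨e, he, -⟩ := h
  intro hab
  have hd := G.not_isDiag_of_mem_edgeSet e.2
  rw [he, hab] at hd
  exact hd (Sym2.mk_isDiag_iff.mpr rfl)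

/-- Rank of a vertex: number of vertices strictly below it in the reachability order. -/
noncomputable def rank (o : G.edgeSet → V) (v : V) : ℕ :=
  Set.ncard {w | TransGen (step o) w v}

lemma rank_lt {o : G.edgeSet → V} (ho : IsAcyclicO G o) {a b : V}
    (h : TransGen (step o) a b) : rank o a < rank o b := by
  have hna : a ∉ {w | TransGen (step o) w a} := fun h' => acyclic_iff ho a h'
  have hsub : insert a {w | TransGen (step o) w a} ⊆ {w | TransGen (step o) w b} := by
    rintro w hw
    rcases hw with rfl | hw
    · exact h
    · exact hw.trans h
  have h1 : (insert a {w | TransGen (step o) w a}).ncard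
      = rank o a + 1 := Set.ncard_insert_of_notMem hna (Set.toFinite _)
  have h2 := Set.ncard_le_ncard hsub (Set.toFinite _)
  rw [h1] at h2
  exact Nat.lt_of_succ_le h2

/-- A canonical acyclic orientation, from a fixed enumeration of the vertices. -/
noncomputable def ordv (v : V) : ℕ := (Fintype.equivFin V v : ℕ)

lemma ordv_inj {a b : V} (h : ordv a = ordv b) : a = b :=
  (Fintype.equivFin V).injective (Fin.ext h)

noncomputable def canon (G : SimpleGraph V) (e : G.edgeSet) : V :=
  Sym2.lift ⟨fun a b => if ordv a ≤ ordv b then b else a, by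
    intro a b
    rcases lt_trichotomy (ordv a) (ordv b) with h | h | h
    · simp [le_of_lt h, not_le.mpr h]
    · simp [ordv_inj h]
    · simp [le_of_lt h, not_le.mpr h]⟩ (e : Sym2 V)

lemma canon_mem (e : G.edgeSet) : canon G e ∈ (e : Sym2 V) := by
  unfold canon
  induction (e : Sym2 V) using Sym2.inductionOn with
  | hf a b =>
    rw [Sym2.lift_mk]
    dsimp only
    split_ifs
    · exact Sym2.mem_mk_right a b
    · exact Sym2.mem_mk_left a b

lemma canon_acyclic (G : SimpleGraph V) : IsAcyclicO G (canon G) := by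
  constructor
  · exact fun e => canon_mem e
  · intro v hv
    have key : ∀ a b : V, step (canon G) a b → ordv a < ordv b := by
      rintro a b h
      have hab : a ≠ b := step_ne h
      obtain ⟨e, he, hcb⟩ := h
      unfold canon at hcb
      rw [he, Sym2.lift_mk] at hcb
      dsimp only at hcb
      split_ifs at hcb with hle
      · exact lt_of_le_of_ne hle fun h' => hab (ordv_inj h')
      · exact absurd (hcb ▸ rfl) hab
    have : TransGen (fun a b : V => ordv a < ordv b) v v :=
      TransGen.mono key _ _ (hv : TransGen (step (canon G)) v v)
    haveI hTr : IsTrans V (fun a b : V => ordv a < ordv b) :=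
      ⟨fun a b c (hab : ordv a < ordv b) hbc => lt_trans hab hbc⟩
    rw [transGen_eq_self] at this
    exact lt_irrefl _ this

end FlipAux

open FlipAux Relation in
/-- The flip graph on the acyclic orientations of a finite graph `G` — two acyclic
orientations being adjacent if they differ in the orientation of exactly one edge —
is connected. -/
theorem flipGraph_connected {V : Type*} [Fintype V] (G : SimpleGraph V) :
    (SimpleGraph.fromRel
      (fun o o' : {o : G.edgeSet → V // IsAcyclicO G o} =>
        ∃ e₀ : G.edgeSet, ∀ e : G.edgeSet, e ≠ e₀ → o.val e = o'.val e)).Connected := by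
  classical
  set FG := (SimpleGraph.fromRel
      (fun o o' : {o : G.edgeSet → V // IsAcyclicO G o} =>
        ∃ e₀ : G.edgeSet, ∀ e : G.edgeSet, e ≠ e₀ → o.val e = o'.val e)) with hFG
  have main : ∀ n : ℕ, ∀ o o' : {o : G.edgeSet → V // IsAcyclicO G o},
      Set.ncard {e | o.1 e ≠ o'.1 e} ≤ n → FG.Reachable o o' := by
    intro n
    induction n with
    | zero =>
      intro o o' h
      have hemp : {e | o.1 e ≠ o'.1 e} = ∅ :=
        Set.ncard_eq_zero (Set.toFinite _) |>.mp (Nat.le_zero.mp h)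
      have heq : o.1 = o'.1 := by
        funext e
        by_contra hne
        exact (Set.eq_empty_iff_forall_notMem.mp hemp e) hne
      exact (Subtype.ext heq) ▸ SimpleGraph.Reachable.refl o
    | succ n ih =>
      intro o o' hcard
      rcases Set.eq_empty_or_nonempty {e | o.1 e ≠ o'.1 e} with hD | hD
      · have heq : o.1 = o'.1 := by
          funext e
          by_contra hne
          exact (Set.eq_empty_iff_forall_notMem.mp hD e) hne
        exact (Subtype.ext heq) ▸ SimpleGraph.Reachable.refl o
      · -- pick a disagreeing edge with minimal "gap"
        set D := {e | o.1 e ≠ o'.1 e} with hDdef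
        -- the tail of an edge
        set tl : G.edgeSet → V := fun e => Sym2.Mem.other (o.2.1 e) with htl
        have hstep_tl : ∀ e : G.edgeSet, step o.1 (tl e) (o.1 e) := by
          intro e
          exact ⟨e, by rw [← Sym2.other_spec (o.2.1 e), Sym2.eq_swap], rfl⟩
        have hrank_tl : ∀ e : G.edgeSet, rank o.1 (tl e) < rank o.1 (o.1 e) :=
          fun e => rank_lt o.2 (TransGen.single (hstep_tl e))
        set gap : G.edgeSet → ℕ := fun e => rank o.1 (o.1 e) - rank o.1 (tl e) with hgap
        have hgap_eq : ∀ e : G.edgeSet, rank o.1 (tl e) + gap e = rank o.1 (o.1 e) := by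
          intro e; have := hrank_tl e; simp only [hgap]; omega
        -- tail is determined by a step
        have htl_eq : ∀ (e : G.edgeSet) (a b : V), (e : Sym2 V) = s(a, b) → o.1 e = b →
            tl e = a := by
          intro e a b he hb
          have hab : a ≠ b := step_ne ⟨e, he, hb⟩
          have h1 : s(o.1 e, tl e) = (e : Sym2 V) := Sym2.other_spec (o.2.1 e)
          rw [he, hb] at h1
          rcases Sym2.eq_iff.mp h1 with ⟨h2, h3⟩ | ⟨h2, h3⟩
          · exact absurd h2.symm hab
          · exact h3
        obtain ⟨e₀, he₀D, he₀min⟩ := Set.exists_min_image D gap (Set.toFinite _) hD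
        set v := o.1 e₀ with hv
        set t := tl e₀ with ht
        have htv : t ≠ v := step_ne (hstep_tl e₀)
        have he₀val : (e₀ : Sym2 V) = s(t, v) := by
          rw [← Sym2.other_spec (o.2.1 e₀), Sym2.eq_swap]
        have ho'e₀ : o'.1 e₀ = t := by
          have hm := o'.2.1 e₀
          rw [he₀val] at hm
          rcases Sym2.mem_iff.mp hm with h | h
          · exact h
          · exact absurd h.symm he₀D
        -- the step relation avoiding e₀
        set step' : V → V → Prop := fun a b =>
          ∃ e : G.edgeSet, e ≠ e₀ ∧ (e : Sym2 V) = s(a, b) ∧ o.1 e = b with hstep'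
        have hstep'_step : ∀ a b, step' a b → step o.1 a b := by
          rintro a b ⟨e, _, he, hb⟩; exact ⟨e, he, hb⟩
        have hrank_step' : ∀ a b, TransGen step' a b → rank o.1 a < rank o.1 b :=
          fun a b h => rank_lt o.2 (TransGen.mono hstep'_step _ _ h)
        -- main structural lemma along step'-paths
        have lemA : ∀ a b, TransGen step' a b →
            TransGen (step o'.1) a b ∨
              ∃ e ∈ D, rank o.1 a + gap e ≤ rank o.1 b := by
          intro a b h
          induction h with
          | @single b' hstep =>
            obtain ⟨e, hne, he, hb⟩ := hstep
            by_cases hDe : e ∈ D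
            · refine Or.inr ⟨e, hDe, ?_⟩
              have hg := hgap_eq e
              rw [htl_eq e a b' he hb, hb] at hg
              omega
            · left
              have hagree : o'.1 e = o.1 e := by
                by_contra hne'
                exact hDe (fun h' => hne' h'.symm)
              exact TransGen.single ⟨e, he, by rw [hagree, hb]⟩
          | @tail b' c' hab hstep ih2 =>
            have hrbc : rank o.1 b' < rank o.1 c' :=
              rank_lt o.2 (TransGen.single (hstep'_step _ _ hstep))
            have hrab : rank o.1 a < rank o.1 b' := hrank_step' _ _ hab
            rcases ih2 with h1 | ⟨e, heD, hle⟩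
            · obtain ⟨e, hne, he, hb⟩ := hstep
              by_cases hDe : e ∈ D
              · refine Or.inr ⟨e, hDe, ?_⟩
                have hg := hgap_eq e
                rw [htl_eq e b' c' he hb, hb] at hg
                omega
              · left
                have hagree : o'.1 e = o.1 e := by
                  by_contra hne'
                  exact hDe (fun h' => hne' h'.symm)
                exact h1.tail ⟨e, he, by rw [hagree, hb]⟩
            · exact Or.inr ⟨e, heD, by omega⟩
        -- key non-reachability condition
        have hC : ¬ TransGen step' t v := by
          intro h
          have hrtv : rank o.1 t + gap e₀ = rank o.1 v := hgap_eq e₀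
          obtain ⟨x, hs, hrest0⟩ := (TransGen.head'_iff).mp h
          rcases reflTransGen_iff_eq_or_transGen.mp hrest0 with heq | hrest
          · obtain ⟨e, hne, he, -⟩ := hs
            rw [← heq] at he
            exact hne (Subtype.ext (he.trans he₀val.symm))
          · have hrx : rank o.1 x < rank o.1 v := hrank_step' _ _ hrest
            obtain ⟨e1, hne1, he1, hb1⟩ := hs
            have hrtx : rank o.1 t < rank o.1 x :=
              rank_lt o.2 (TransGen.single ⟨e1, he1, hb1⟩)
            rcases lemA _ _ hrest with h1 | ⟨e, heD, hle⟩
            · by_cases hDe1 : e1 ∈ D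
              · -- gap e1 < gap e₀, contradiction with minimality
                have := hgap_eq e1
                rw [htl_eq e1 t x he1 hb1, hb1] at this
                have hmin := he₀min e1 hDe1
                omega
              · have hagree : o'.1 e1 = o.1 e1 := by
                  by_contra hne'
                  exact hDe1 (fun h' => hne' h'.symm)
                have hcyc : TransGen (step o'.1) t t :=
                  (TransGen.head ⟨e1, he1, by rw [hagree, hb1]⟩ h1).tail
                    ⟨e₀, by rw [he₀val, Sym2.eq_swap], ho'e₀⟩
                exact acyclic_iff o'.2 t hcyc
            · have hmin := he₀min e heD
              omega
        -- the flipped orientation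
        set o₂ : G.edgeSet → V := fun e => if e = e₀ then t else o.1 e with ho₂
        have ho₂e₀ : o₂ e₀ = t := by simp [ho₂]
        have ho₂ne : ∀ e : G.edgeSet, e ≠ e₀ → o₂ e = o.1 e := by
          intro e he; simp [ho₂, he]
        -- steps of o₂ decompose
        have hstep₂ : ∀ a b, step o₂ a b → (a = v ∧ b = t) ∨ step' a b := by
          rintro a b ⟨e, he, hb⟩
          by_cases hee : e = e₀
          · subst hee
            rw [ho₂e₀] at hb
            rw [he₀val] at he
            rcases Sym2.eq_iff.mp he with ⟨h1, h2⟩ | ⟨h1, h2⟩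
            · exact absurd (hb.trans h2.symm) htv
            · exact Or.inl ⟨h2.symm, hb.symm⟩
          · exact Or.inr ⟨e, hee, he, by rw [← ho₂ne e hee, hb]⟩
        have hrt_ne : ∀ a, ReflTransGen step' t a → ReflTransGen step' a v → False := by
          intro a h1 h2
          have : ReflTransGen step' t v := h1.trans h2
          rcases reflTransGen_iff_eq_or_transGen.mp this with h | h
          · exact htv h.symm
          · exact hC h
        have claimK : ∀ a b, TransGen (step o₂) a b →
            TransGen step' a b ∨ (ReflTransGen step' a v ∧ ReflTransGen step' t b) := by
          intro a b h
          induction h with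
          | single hs =>
            rcases hstep₂ _ _ hs with ⟨rfl, rfl⟩ | hs'
            · exact Or.inr ⟨ReflTransGen.refl, ReflTransGen.refl⟩
            · exact Or.inl (TransGen.single hs')
          | tail hab hs ih2 =>
            rcases hstep₂ _ _ hs with ⟨rfl, rfl⟩ | hs'
            · rcases ih2 with h1 | ⟨h1, h2⟩
              · exact Or.inr ⟨h1.to_reflTransGen, ReflTransGen.refl⟩
              · exact absurd (hrt_ne _ h2 ReflTransGen.refl) not_false
            · rcases ih2 with h1 | ⟨h1, h2⟩
              · exact Or.inl (h1.tail hs')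
              · exact Or.inr ⟨h1, h2.tail hs'⟩
        have ho₂acyclic : IsAcyclicO G o₂ := by
          constructor
          · intro e
            by_cases hee : e = e₀
            · rw [hee, ho₂e₀]
              exact Sym2.other_mem (o.2.1 e₀)
            · rw [ho₂ne e hee]
              exact o.2.1 e
          · intro w hw
            rcases claimK w w (hw : TransGen (step o₂) w w) with h1 | ⟨h1, h2⟩
            · exact acyclic_iff o.2 w (TransGen.mono hstep'_step _ _ h1)
            · exact hrt_ne w h2 h1
        set O₂ : {o : G.edgeSet → V // IsAcyclicO G o} := ⟨o₂, ho₂acyclic⟩ with hO₂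
        have hadj : FG.Adj o O₂ := by
          rw [hFG, SimpleGraph.fromRel_adj]
          refine ⟨?_, Or.inl ⟨e₀, fun e he => (ho₂ne e he).symm⟩⟩
          intro hcontra
          have h1 : o.1 e₀ = O₂.1 e₀ := by rw [hcontra]
          exact htv (h1.trans ho₂e₀).symm
        have hD₂ : {e | O₂.1 e ≠ o'.1 e} = D \ {e₀} := by
          ext e
          simp only [Set.mem_setOf_eq, Set.mem_diff, Set.mem_singleton_iff, hDdef]
          constructor
          · intro hne
            by_cases hee : e = e₀
            · exfalso
              rw [hee] at hne
              exact hne ((show O₂.1 e₀ = t from ho₂e₀).trans ho'e₀.symm)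
            · exact ⟨fun h => hne ((ho₂ne e hee).trans h), hee⟩
          · rintro ⟨hne, hee⟩
            exact fun h => hne ((ho₂ne e hee).symm.trans h)
        have hcard₂ : Set.ncard {e | O₂.1 e ≠ o'.1 e} ≤ n := by
          rw [hD₂]
          have := Set.ncard_diff_singleton_lt_of_mem he₀D (Set.toFinite _)
          omega
        exact (hadj.reachable).trans (ih O₂ o' hcard₂)
  haveI : Nonempty {o : G.edgeSet → V // IsAcyclicO G o} := ⟨⟨canon G, canon_acyclic G⟩⟩
  exact ⟨fun o o' => main _ o o' le_rfl⟩
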